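/- (Tangential approach of the MRPI barrier of the imperfect SIR model.) Let 0 < β_min ≤ β_max, γ_min > 0 and 0 < I_max < 1. Suppose S, I : ℝ → ℝ are differentiable on a neighbourhood of t̄ and satisfy the closed-loop equations S'(t) = −β̂(I(t)) S(t) I(t) and I'(t) = β̂(I(t)) S(t) I(t) − γ_min I(t) there, with I(t̄) = I_max and S(t̄) = γ_min / β_min. Then there exists ε > 0 such that I(t) < I_max for all t ∈ (t̄ − ε, t̄); i.e. the barrier curve reaching the ultimate tangent point (γ_min/β_min, I_max) with the worst-case parameter γ ≡ γ_min lies in the open region {I < I_max} immediately before the tangency time. -/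

import Mathlib

/-- The affine feedback `β̂(I) = β_min (I/I_max) + β_max (1 − I/I_max)`. -/
noncomputable def betaHat (βmin βmax Imax i : ℝ) : ℝ :=
  βmin * (i / Imax) + βmax * (1 - i / Imax)

/-- Tangential approach of the MRPI barrier of the imperfect SIR model:
the barrier curve reaching the ultimate tangent point `(γ_min/β_min, I_max)`
under the feedback `β̂` with worst-case parameter `γ ≡ γ_min` satisfies
`I(t) < I_max` immediately before the tangency time. -/
theorem sir_imperfect_mrpi_barrier_tangential_approach
    (βmin βmax γmin Imax tbar : ℝ)
    (hβmin : 0 < βmin) (hβ : βmin ≤ βmax) (hγmin : 0 < γmin)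
    (hI0 : 0 < Imax) (hI1 : Imax < 1)
    (S I : ℝ → ℝ)
    (hS : ∀ᶠ t in nhds tbar,
      HasDerivAt S (-(betaHat βmin βmax Imax (I t) * S t * I t)) t)
    (hI : ∀ᶠ t in nhds tbar,
      HasDerivAt I (betaHat βmin βmax Imax (I t) * S t * I t - γmin * I t) t)
    (hItan : I tbar = Imax) (hStan : S tbar = γmin / βmin) :
    ∃ ε > 0, ∀ t ∈ Set.Ioo (tbar - ε) tbar, I t < Imax := by
  set g : ℝ → ℝ := fun t => betaHat βmin βmax Imax (I t) * S t * I t - γmin * I t with hgdef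
  have hImne : Imax ≠ 0 := ne_of_gt hI0
  have hβne : βmin ≠ 0 := ne_of_gt hβmin
  -- I'(tbar) = 0
  have hIself := hI.self_of_nhds
  have hval0 : betaHat βmin βmax Imax (I tbar) * S tbar * I tbar - γmin * I tbar = 0 := by
    rw [hItan, hStan]; simp [betaHat]; field_simp; ring
  have hI0' : HasDerivAt I 0 tbar := hval0 ▸ hIself
  -- S'(tbar) = -(γmin * Imax)
  have hSself := hS.self_of_nhds
  have hvalS : -(betaHat βmin βmax Imax (I tbar) * S tbar * I tbar) = -(γmin * Imax) := by
    rw [hItan, hStan]; simp [betaHat]; field_simp; left; ring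
  have hS0' : HasDerivAt S (-(γmin * Imax)) tbar := hvalS ▸ hSself
  -- g has derivative -(βmin*γmin*Imax*Imax) at tbar
  have hB : HasDerivAt (fun t => βmin * (I t / Imax) + βmax * (1 - I t / Imax)) 0 tbar := by
    have h := (((hI0'.div_const Imax).const_mul βmin).add
      (((hasDerivAt_const tbar (1:ℝ)).sub (hI0'.div_const Imax)).const_mul βmax))
    simp at h; exact h
  have hg : HasDerivAt g (-(βmin * γmin * Imax * Imax)) tbar := by
    have h := ((hB.mul hS0').mul hI0').sub (hI0'.const_mul γmin)
    have heq : (0 * S tbar + (βmin * (I tbar / Imax) + βmax * (1 - I tbar / Imax)) * -(γmin * Imax)) * I tbar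
        + (βmin * (I tbar / Imax) + βmax * (1 - I tbar / Imax)) * S tbar * 0 - γmin * 0
        = -(βmin * γmin * Imax * Imax) := by
      rw [hItan, div_self hImne]; ring
    simp only [Pi.mul_apply] at h
    rw [heq] at h
    exact h
  have hgtbar : g tbar = 0 := hval0
  -- slope argument: g t > 0 just left of tbar
  have hslope : Filter.Tendsto (slope g tbar) (nhdsWithin tbar {tbar}ᶜ) (nhds (-(βmin * γmin * Imax * Imax))) :=
    hasDerivAt_iff_tendsto_slope.mp hg
  have hc : -(βmin * γmin * Imax * Imax) < 0 := by
    have : 0 < βmin * γmin * Imax * Imax := by positivity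
    linarith
  have hev : ∀ᶠ t in nhdsWithin tbar {tbar}ᶜ, slope g tbar t < 0 :=
    hslope.eventually_lt_const hc
  have hmono : nhdsWithin tbar (Set.Iio tbar) ≤ nhdsWithin tbar {tbar}ᶜ :=
    nhdsWithin_mono tbar (fun x hx => ne_of_lt hx)
  have hev2 : ∀ᶠ t in nhdsWithin tbar (Set.Iio tbar), 0 < g t := by
    filter_upwards [hev.filter_mono hmono, self_mem_nhdsWithin] with t ht ht'
    have htlt : t < tbar := ht'
    rw [slope_def_field, hgtbar] at ht
    have : (g t - 0) / (t - tbar) < 0 := by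
      simpa [div_eq_inv_mul] using ht
    rcases div_neg_iff.mp this with ⟨h1, h2⟩ | ⟨h1, h2⟩
    · linarith
    · linarith
  obtain ⟨l, hl, hsub⟩ := mem_nhdsLT_iff_exists_Ioo_subset.mp hev2
  -- neighborhood where hI holds
  rw [Metric.eventually_nhds_iff] at hI
  obtain ⟨δ, hδ, hIball⟩ := hI
  set ε : ℝ := min (tbar - l) (δ / 2) with hεdef
  have hεpos : 0 < ε := lt_min (by simpa [sub_pos] using hl) (by linarith)
  refine ⟨ε, hεpos, fun t ht => ?_⟩
  have hderiv : ∀ x ∈ Set.Icc (tbar - ε) tbar,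
      HasDerivAt I (g x) x := by
    intro x hx
    apply hIball
    rw [Real.dist_eq, abs_lt]
    constructor
    · have := hx.1
      have : tbar - ε ≤ x := hx.1
      have hεδ : ε ≤ δ / 2 := min_le_right _ _
      linarith
    · have := hx.2; linarith
  have hcont : ContinuousOn I (Set.Icc (tbar - ε) tbar) :=
    fun x hx => (hderiv x hx).continuousAt.continuousWithinAt
  have hdpos : ∀ x ∈ interior (Set.Icc (tbar - ε) tbar), 0 < deriv I x := by
    rw [interior_Icc]
    intro x hx
    have hd := hderiv x ⟨le_of_lt hx.1, le_of_lt hx.2⟩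
    rw [hd.deriv]
    apply hsub
    have hεl : ε ≤ tbar - l := min_le_left _ _
    exact ⟨by linarith [hx.1], hx.2⟩
  have hmono' : StrictMonoOn I (Set.Icc (tbar - ε) tbar) :=
    strictMonoOn_of_deriv_pos (convex_Icc _ _) hcont hdpos
  have ht1 : t ∈ Set.Icc (tbar - ε) tbar := ⟨le_of_lt ht.1, le_of_lt ht.2⟩
  have ht2 : tbar ∈ Set.Icc (tbar - ε) tbar := ⟨by linarith [hεpos], le_refl _⟩
  have := hmono' ht1 ht2 ht.2
  rwa [hItan] at this
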